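/- Let k ∈ ℤ, k ≥ -1, and for 1 ≤ i ≤ k+2 define h_i(x,y) = -i² + ki - 3xi + 3i - 3x² - k + 2kx + 6x + ky + 3y - 2. For each i with 1 ≤ i ≤ k+2, the point (x^i, y^i) = ((1-i)/3, ((i-1)(i-1-k))/(3(k+3))) satisfies h_i(x^i, y^i) = 0 and h_{k+2}(x^i, y^i) = 0, and moreover h_j(x^i, y^i) ≠ 0 for every integer j with 1 ≤ j < i. -/
import Mathlib


noncomputable def h (k j x y : ℂ) : ℂ :=
  -j ^ 2 + k * j - 3 * x * j + 3 * j - 3 * x ^ 2 - k + 2 * k * x + 6 * x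
    + k * y + 3 * y - 2

lemma hfact (k i j : ℂ) (hk3 : k + 3 ≠ 0) :
    h k j ((1 - i) / 3) ((i - 1) * (i - 1 - k) / (3 * (k + 3)))
      = (i - j) * (j - 2 - k) := by
  unfold h
  field_simp
  ring

theorem stmt_19 (k : ℤ) (hk : -1 ≤ k) (i : ℤ) (hi1 : 1 ≤ i) (hi2 : i ≤ k + 2) :
    h (k : ℂ) (i : ℂ) ((1 - (i : ℂ)) / 3)
        (((i : ℂ) - 1) * ((i : ℂ) - 1 - (k : ℂ)) / (3 * ((k : ℂ) + 3))) = 0 ∧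
    h (k : ℂ) ((k : ℂ) + 2) ((1 - (i : ℂ)) / 3)
        (((i : ℂ) - 1) * ((i : ℂ) - 1 - (k : ℂ)) / (3 * ((k : ℂ) + 3))) = 0 ∧
    ∀ j : ℤ, 1 ≤ j → j < i →
      h (k : ℂ) (j : ℂ) ((1 - (i : ℂ)) / 3)
        (((i : ℂ) - 1) * ((i : ℂ) - 1 - (k : ℂ)) / (3 * ((k : ℂ) + 3))) ≠ 0 := by
  have hk3 : (k : ℂ) + 3 ≠ 0 := by
    have : ((k + 3 : ℤ) : ℂ) ≠ 0 := by
      exact_mod_cast (by omega : k + 3 ≠ 0)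
    push_cast at this; exact this
  refine ⟨?_, ?_, ?_⟩
  · rw [hfact _ _ _ hk3]; ring
  · rw [hfact _ _ _ hk3]; ring
  · intro j hj1 hj2
    rw [hfact _ _ _ hk3]
    have h1 : (i : ℂ) - (j : ℂ) ≠ 0 := by
      have : ((i - j : ℤ) : ℂ) ≠ 0 := by exact_mod_cast (by omega : i - j ≠ 0)
      push_cast at this; exact this
    have h2 : (j : ℂ) - 2 - (k : ℂ) ≠ 0 := by
      have : ((j - 2 - k : ℤ) : ℂ) ≠ 0 := by exact_mod_cast (by omega : j - 2 - k ≠ 0)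
      push_cast at this; exact this
    exact mul_ne_zero h1 h2
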